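/- The set of positive integers n such that A_n equals the set of positive divisors of n is exactly {1, 2, 4, 6, 12}, where A_n = {d ∈ ℕ : d ≥ 1 and k(n,d) ≥ |r(n,d)| + 1} with n = k(n,d)·d + r(n,d) and r(n,d) ∈ [-⌊d/2⌋, ⌈d/2⌉-1]. -/
import Mathlib

/-- If `a*a + 3*a ≤ 2*n`, then `a` is an unavoidable obstruction for `n`. -/
lemma stmt_15_helper (n a : ℤ) (ha : 0 < a) (hbound : a * a + 3 * a ≤ 2 * n) :
    ∀ k r : ℤ, n = k * a + r → -(a / 2) ≤ r → r ≤ (a + 1) / 2 - 1 → k ≥ |r| + 1 := by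
  intro k r hkr h1 h2
  have habs : 2 * |r| ≤ a := by
    rcases abs_cases r with ⟨he, _⟩ | ⟨he, _⟩ <;> rw [he] <;> omega
  have h2r : 2 * r ≤ a - 1 := by omega
  have key : (2 * |r| + 2) * a < (2 * k) * a := by
    nlinarith [mul_le_mul_of_nonneg_right habs ha.le, abs_nonneg r]
  have h3 : 2 * |r| + 2 < 2 * k := lt_of_mul_lt_mul_right key ha.le
  linarith

/-- Divisors are always unavoidable obstructions. -/
lemma stmt_15_dvd_helper (n d : ℤ) (hn : 0 < n) (hd : 0 < d) (hdvd : d ∣ n) :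
    ∀ k r : ℤ, n = k * d + r → -(d / 2) ≤ r → r ≤ (d + 1) / 2 - 1 → k ≥ |r| + 1 := by
  intro k r hkr h1 h2
  obtain ⟨c, hc⟩ := hdvd
  have hdr : d ∣ r := ⟨c - k, by linear_combination hc - hkr⟩
  obtain ⟨e, he⟩ := hdr
  have hrb : -d < r ∧ r < d := by omega
  have he0 : e = 0 := by
    rcases lt_trichotomy e 0 with hh | hh | hh
    · have h4 : d * e ≤ d * (-1) := mul_le_mul_of_nonneg_left (by omega) hd.le
      rw [mul_neg_one] at h4
      linarith [hrb.1]
    · exact hh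
    · have h4 : d * 1 ≤ d * e := mul_le_mul_of_nonneg_left (by omega) hd.le
      rw [mul_one] at h4
      linarith [hrb.2]
  have hr0 : r = 0 := by rw [he0, mul_zero] at he; exact he
  have hk : 0 < k := by
    by_contra hk
    push_neg at hk
    nlinarith
  rw [hr0, abs_zero]
  omega

/-- Witness lemma: a single counterexample refutes the obstruction condition. -/
lemma stmt_15_wit (n d k r : ℤ) (h : n = k * d + r) (h1 : -(d / 2) ≤ r)
    (h2 : r ≤ (d + 1) / 2 - 1) (h3 : k < |r| + 1)
    (hL : ∀ k r : ℤ, n = k * d + r → -(d / 2) ≤ r → r ≤ (d + 1) / 2 - 1 → k ≥ |r| + 1) :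
    False :=
  absurd (hL k r h h1 h2) (not_le.mpr h3)

/-- For d > n, the obstruction condition fails. -/
lemma stmt_15_big (n d : ℤ) (hn : 0 < n) (hdn : n < d)
    (hL : ∀ k r : ℤ, n = k * d + r → -(d / 2) ≤ r → r ≤ (d + 1) / 2 - 1 → k ≥ |r| + 1) :
    False := by
  rcases le_or_gt d (2 * n) with h | h
  · refine stmt_15_wit n d 1 (n - d) (by ring) (by omega) (by omega) ?_ hL
    rw [abs_of_neg (by omega : n - d < 0)]
    omega
  · refine stmt_15_wit n d 0 n (by ring) (by omega) (by omega) ?_ hL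
    rw [abs_of_pos hn]
    omega

/-- A_n equals the set of positive divisors of n exactly for n ∈ {1, 2, 4, 6, 12}. -/
theorem stmt_15 :
    {n : ℤ | 0 < n ∧ ∀ d : ℤ, 0 < d →
        ((∀ k r : ℤ, n = k * d + r → -(d / 2) ≤ r → r ≤ (d + 1) / 2 - 1 →
            k ≥ |r| + 1) ↔ d ∣ n)} = {1, 2, 4, 6, 12} := by
  ext n
  simp only [Set.mem_setOf_eq, Set.mem_insert_iff, Set.mem_singleton_iff]
  constructor
  · rintro ⟨hn, h⟩
    have key : ∀ d : ℤ, 0 < d → d * d + 3 * d ≤ 2 * n → d ∣ n := fun d hd hb =>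
      (h d hd).mp (stmt_15_helper n d hd hb)
    have h2 : 3 ≤ n → 2 ∣ n := by
      intro hn3
      refine (h 2 (by norm_num)).mp ?_
      intro k r hkr hr1 hr2
      rcases abs_cases r with ⟨he, _⟩ | ⟨he, _⟩ <;> rw [he] <;> omega
    have h3 : 7 ≤ n → 3 ∣ n := by
      intro hn3
      refine (h 3 (by norm_num)).mp ?_
      intro k r hkr hr1 hr2
      rcases abs_cases r with ⟨he, _⟩ | ⟨he, _⟩ <;> rw [he] <;> omega
    have h4 : 13 ≤ n → 4 ∣ n := by
      intro hn3
      refine (h 4 (by norm_num)).mp ?_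
      intro k r hkr hr1 hr2
      rcases abs_cases r with ⟨he, _⟩ | ⟨he, _⟩ <;> rw [he] <;> omega
    have h5 : 17 ≤ n → 5 ∣ n := by
      intro hn3
      refine (h 5 (by norm_num)).mp ?_
      intro k r hkr hr1 hr2
      rcases abs_cases r with ⟨he, _⟩ | ⟨he, _⟩ <;> rw [he] <;> omega
    have h7 : 31 ≤ n → 7 ∣ n := by
      intro hn3
      refine (h 7 (by norm_num)).mp ?_
      intro k r hkr hr1 hr2
      rcases abs_cases r with ⟨he, _⟩ | ⟨he, _⟩ <;> rw [he] <;> omega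
    by_cases hc1 : n ≤ 2
    · omega
    have e2 := h2 (by omega)
    by_cases hc2 : n ≤ 6
    · omega
    have e3 := h3 (by omega)
    by_cases hc3 : n ≤ 12
    · omega
    have e4 := h4 (by omega)
    by_cases hc4 : n ≤ 16
    · omega
    have e5 := h5 (by omega)
    by_cases hc5 : n ≤ 30
    · omega
    have e7 := h7 (by omega)
    have hn420 : 420 ≤ n := by omega
    exfalso
    set d : ℤ := (Nat.sqrt (2 * n).toNat : ℤ) with hddef
    have hd0 : 0 ≤ d := Int.natCast_nonneg _
    have hd1 : d * d ≤ 2 * n := by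
      have hs := Nat.sqrt_le' (2 * n).toNat
      rw [pow_two] at hs
      have : ((Nat.sqrt (2 * n).toNat : ℤ)) * ((Nat.sqrt (2 * n).toNat : ℤ))
          ≤ (((2 * n).toNat : ℕ) : ℤ) := by exact_mod_cast hs
      rwa [Int.toNat_of_nonneg (by omega)] at this
    have hd2 : 2 * n < (d + 1) * (d + 1) := by
      have hs := Nat.lt_succ_sqrt' (2 * n).toNat
      rw [Nat.succ_eq_add_one, pow_two] at hs
      have : (((2 * n).toNat : ℕ) : ℤ)
          < ((Nat.sqrt (2 * n).toNat : ℤ) + 1) * ((Nat.sqrt (2 * n).toNat : ℤ) + 1) := by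
        exact_mod_cast hs
      rwa [Int.toNat_of_nonneg (by omega)] at this
    have hd12 : 12 ≤ d := by nlinarith
    have ha : (d - 2) ∣ n := key (d - 2) (by omega) (by nlinarith)
    have hb : (d - 3) ∣ n := key (d - 3) (by omega) (by nlinarith)
    have hco : IsCoprime (d - 2) (d - 3) := ⟨1, -1, by ring⟩
    have hmul : (d - 2) * (d - 3) ∣ n := hco.mul_dvd ha hb
    have hle : (d - 2) * (d - 3) ≤ n := Int.le_of_dvd hn hmul
    nlinarith
  · intro hmem
    have hn : 0 < n := by rcases hmem with h | h | h | h | h <;> omega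
    refine ⟨hn, ?_⟩
    intro d hd
    constructor
    · intro hL
      by_contra hnd
      rcases le_or_gt d n with hdn | hdn
      · rcases hmem with h | h | h | h | h <;> subst h <;> interval_cases d
        · exact hnd (by norm_num)
        · exact hnd (by norm_num)
        · exact hnd (by norm_num)
        · exact hnd (by norm_num)
        · exact hnd (by norm_num)
        · exact stmt_15_wit 4 3 1 1 (by ring) (by norm_num) (by norm_num) (by norm_num) hL
        · exact hnd (by norm_num)
        · exact hnd (by norm_num)
        · exact hnd (by norm_num)
        · exact hnd (by norm_num)
        · exact stmt_15_wit 6 4 2 (-2) (by ring) (by norm_num) (by norm_num) (by norm_num) hL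
        · exact stmt_15_wit 6 5 1 1 (by ring) (by norm_num) (by norm_num) (by norm_num) hL
        · exact hnd (by norm_num)
        · exact hnd (by norm_num)
        · exact hnd (by norm_num)
        · exact hnd (by norm_num)
        · exact hnd (by norm_num)
        · exact stmt_15_wit 12 5 2 2 (by ring) (by norm_num) (by norm_num) (by norm_num) hL
        · exact hnd (by norm_num)
        · exact stmt_15_wit 12 7 2 (-2) (by ring) (by norm_num) (by norm_num) (by norm_num) hL
        · exact stmt_15_wit 12 8 2 (-4) (by ring) (by norm_num) (by norm_num) (by norm_num) hL
        · exact stmt_15_wit 12 9 1 3 (by ring) (by norm_num) (by norm_num) (by norm_num) hL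
        · exact stmt_15_wit 12 10 1 2 (by ring) (by norm_num) (by norm_num) (by norm_num) hL
        · exact stmt_15_wit 12 11 1 1 (by ring) (by norm_num) (by norm_num) (by norm_num) hL
        · exact hnd (by norm_num)
      · exact stmt_15_big n d hn hdn hL
    · intro hdvd
      exact stmt_15_dvd_helper n d hn hd hdvd
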